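/- Let p ∈ (1,2) and N ∈ ℕ. For every n ∈ ℕ and every x₁, …, xₙ in the closed unit ball of (ℝ^N, ‖·‖_p), there exist signs α₁, …, αₙ ∈ {−1, 1} such that ‖Σᵢ αᵢ xᵢ‖_p ≤ n^(1/p). -/

import Mathlib

open Real

lemma rpow_add_le_add_rpow' {s : ℝ} (a b : ℝ) (ha : 0 ≤ a) (hb : 0 ≤ b)
    (hs0 : 0 ≤ s) (hs1 : s ≤ 1) : (a + b) ^ s ≤ a ^ s + b ^ s := by
  have h := NNReal.rpow_add_le_add_rpow (⟨a, ha⟩ : NNReal) (⟨b, hb⟩ : NNReal) hs0 hs1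
  have := NNReal.coe_le_coe.2 h
  exact this

lemma scalar_clarkson {p : ℝ} (hp1 : 1 ≤ p) (hp2 : p ≤ 2) (a b : ℝ) :
    |a + b| ^ p + |a - b| ^ p ≤ 2 * (|a| ^ p + |b| ^ p) := by
  set s : ℝ := p / 2 with hs
  have hs0 : 0 ≤ s := by positivity
  have hs1 : s ≤ 1 := by rw [hs]; linarith
  have habs : ∀ c : ℝ, |c| ^ p = (c ^ 2) ^ s := by
    intro c
    rw [← sq_abs, ← Real.rpow_natCast |c| 2, ← Real.rpow_mul (abs_nonneg c)]
    congr 1; rw [hs]; ring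
  have hX : (0:ℝ) ≤ (a+b)^2 := sq_nonneg _
  have hY : (0:ℝ) ≤ (a-b)^2 := sq_nonneg _
  have hcc := (Real.concaveOn_rpow hs0 hs1).2 (Set.mem_Ici.2 hX) (Set.mem_Ici.2 hY)
    (by norm_num : (0:ℝ) ≤ 1/2) (by norm_num : (0:ℝ) ≤ 1/2) (by norm_num)
  simp only [smul_eq_mul] at hcc
  have hsum : (1/2 : ℝ) * ((a+b)^2) + (1/2 : ℝ) * ((a-b)^2) = a^2 + b^2 := by ring
  rw [hsum] at hcc
  have h1 : |a+b| ^ p + |a-b| ^ p ≤ 2 * (a^2 + b^2) ^ s := by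
    rw [habs, habs]
    nlinarith [hcc]
  have h2 : (a^2 + b^2) ^ s ≤ |a| ^ p + |b| ^ p := by
    rw [habs a, habs b]
    exact rpow_add_le_add_rpow' _ _ (sq_nonneg a) (sq_nonneg b) hs0 hs1
  calc |a+b| ^ p + |a-b| ^ p ≤ 2 * (a^2+b^2) ^ s := h1
    _ ≤ 2 * (|a| ^ p + |b| ^ p) := by linarith


lemma key_claim {p : ℝ} (hp1 : 1 ≤ p) (hp2 : p ≤ 2) (N : ℕ) :
    ∀ (n : ℕ) (x : Fin n → Fin N → ℝ), (∀ i, ∑ j, |x i j| ^ p ≤ 1) →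
    ∃ α : Fin n → ℝ, (∀ i, α i = 1 ∨ α i = -1) ∧
      ∑ j, |(∑ i, α i • x i) j| ^ p ≤ (n : ℝ) := by
  have hp0 : p ≠ 0 := by positivity
  intro n
  induction n with
  | zero =>
    intro x _
    refine ⟨fun _ => 1, fun i => Or.inl rfl, ?_⟩
    simp [Real.zero_rpow hp0]
  | succ n ih =>
    intro x hx
    obtain ⟨α, hα, hS⟩ := ih (fun i => x i.castSucc) (fun i => hx i.castSucc)
    set S : Fin N → ℝ := ∑ i, α i • x i.castSucc with hSdef
    set y : Fin N → ℝ := x (Fin.last n) with hydef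
    have hkey : ∑ j, |S j + y j| ^ p + ∑ j, |S j - y j| ^ p
        ≤ 2 * ((n : ℝ) + 1) := by
      have h1 : ∑ j, |S j + y j| ^ p + ∑ j, |S j - y j| ^ p
          ≤ 2 * (∑ j, |S j| ^ p + ∑ j, |y j| ^ p) := by
        rw [← Finset.sum_add_distrib]
        rw [← Finset.sum_add_distrib, Finset.mul_sum]
        exact Finset.sum_le_sum fun j _ => scalar_clarkson hp1 hp2 (S j) (y j)
      have h2 : ∑ j, |y j| ^ p ≤ 1 := hx (Fin.last n)
      linarith
    have hmin : ∑ j, |S j + y j| ^ p ≤ (n : ℝ) + 1 ∨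
        ∑ j, |S j - y j| ^ p ≤ (n : ℝ) + 1 := by
      by_contra hc
      push_neg at hc
      linarith [hc.1, hc.2]
    rcases hmin with h | h
    · refine ⟨Fin.snoc α 1, ?_, ?_⟩
      · intro i
        refine Fin.lastCases ?_ ?_ i
        · simp
        · intro i; simpa using hα i
      · have hsum : (∑ i : Fin (n+1), (Fin.snoc α 1 : Fin (n+1) → ℝ) i • x i)
            = S + (1:ℝ) • y := by
          rw [Fin.sum_univ_castSucc]
          simp [hSdef, hydef]
        rw [hsum]
        push_cast
        simpa [Pi.add_apply] using h
    · refine ⟨Fin.snoc α (-1), ?_, ?_⟩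
      · intro i
        refine Fin.lastCases ?_ ?_ i
        · simp
        · intro i; simpa using hα i
      · have hsum : (∑ i : Fin (n+1), (Fin.snoc α (-1:ℝ) : Fin (n+1) → ℝ) i • x i)
            = S + (-1:ℝ) • y := by
          rw [Fin.sum_univ_castSucc]
          simp [hSdef, hydef]
        rw [hsum]
        push_cast
        have : ∀ j, (S + (-1:ℝ) • y) j = S j - y j := by
          intro j; simp [sub_eq_add_neg]
        simp only [this]
        simpa using h

noncomputable def pnorm (p : ℝ) {N : ℕ} (x : Fin N → ℝ) : ℝ :=
  (∑ i, |x i| ^ p) ^ (1 / p)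

theorem stmt_9 (p : ℝ) (hp : 1 < p) (hp2 : p < 2) (N : ℕ) (n : ℕ)
    (x : Fin n → Fin N → ℝ) (hx : ∀ i, pnorm p (x i) ≤ 1) :
    ∃ α : Fin n → ℝ, (∀ i, α i = 1 ∨ α i = -1) ∧
      pnorm p (∑ i, α i • x i) ≤ (n : ℝ) ^ (1 / p) := by
  have hp0 : (0:ℝ) < p := lt_trans one_pos hp
  have hx' : ∀ i, ∑ j, |x i j| ^ p ≤ 1 := by
    intro i
    have h := hx i
    unfold pnorm at h
    have hS : (0:ℝ) ≤ ∑ j, |x i j| ^ p :=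
      Finset.sum_nonneg fun j _ => Real.rpow_nonneg (abs_nonneg _) p
    have heq : ((∑ j, |x i j| ^ p) ^ (1/p)) ^ p = ∑ j, |x i j| ^ p := by
      rw [← Real.rpow_mul hS, one_div, inv_mul_cancel₀ hp0.ne', Real.rpow_one]
    calc ∑ j, |x i j| ^ p = ((∑ j, |x i j| ^ p) ^ (1/p)) ^ p := heq.symm
      _ ≤ 1 ^ p := Real.rpow_le_rpow (Real.rpow_nonneg hS _) h hp0.le
      _ = 1 := Real.one_rpow p
  obtain ⟨α, h1, h2⟩ := key_claim hp.le hp2.le N n x hx'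
  refine ⟨α, h1, ?_⟩
  unfold pnorm
  exact Real.rpow_le_rpow
    (Finset.sum_nonneg fun j _ => Real.rpow_nonneg (abs_nonneg _) p) h2 (by positivity)
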